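/- A simple 3-polytope P is flag if and only if every facet of P is surrounded by a k-belt, where k is the number of edges of that facet. -/

import Mathlib

/-- An abstract simplicial complex on vertex type `V` (with the empty face included). -/
structure SC (V : Type) where
  faces : Set (Finset V)
  empty_mem : ∅ ∈ faces
  down_closed : ∀ s ∈ faces, ∀ t ⊆ s, t ∈ faces

variable {V : Type}
section Sphere
variable [DecidableEq V]

/-- The degree of a vertex: the number of vertices adjacent to it. Dually, the number
of edges of the facet of the simple 3-polytope corresponding to `v`. -/
noncomputable def SC.vdeg (K : SC V) (v : V) : ℕ :=
  Set.ncard {u | u ≠ v ∧ ({v, u} : Finset V) ∈ K.faces}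

/-- `K` is a simplicial 2-sphere: pure 2-dimensional, every vertex present, each edge in
exactly two triangles, vertex links connected, connected, and Euler characteristic 2.
Dually, the boundary complex of a simple 3-polytope. -/
def IsSphere2 [Fintype V] (K : SC V) : Prop :=
  (∀ v : V, ({v} : Finset V) ∈ K.faces) ∧
  (∀ s ∈ K.faces, s.card ≤ 3) ∧
  (∀ s ∈ K.faces, ∃ t ∈ K.faces, s ⊆ t ∧ t.card = 3) ∧
  (∀ e ∈ K.faces, e.card = 2 → Set.ncard {t | t ∈ K.faces ∧ t.card = 3 ∧ e ⊆ t} = 2) ∧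
  (∀ (v : V) (t t' : Finset V), t ∈ K.faces → t' ∈ K.faces → t.card = 3 → t'.card = 3 →
    v ∈ t → v ∈ t' →
    Relation.ReflTransGen
      (fun a b => a ∈ K.faces ∧ b ∈ K.faces ∧ a.card = 3 ∧ b.card = 3 ∧
        v ∈ a ∧ v ∈ b ∧ (a ∩ b).card = 2) t t') ∧
  (∀ u w : V, Relation.ReflTransGen (fun a b => a ≠ b ∧ ({a, b} : Finset V) ∈ K.faces) u w) ∧
  ((Set.ncard {s | s ∈ K.faces ∧ s.card = 1} : ℤ)
    - (Set.ncard {s | s ∈ K.faces ∧ s.card = 2} : ℤ)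
    + (Set.ncard {s | s ∈ K.faces ∧ s.card = 3} : ℤ) = 2)

/-- `K` is flag: every nonempty collection of pairwise adjacent vertices spans a face.
Dually: every family of pairwise intersecting facets of `P` has a common point. -/
def IsFlag (K : SC V) : Prop :=
  ∀ s : Finset V, s.Nonempty → (∀ u ∈ s, ({u} : Finset V) ∈ K.faces) →
    (∀ u ∈ s, ∀ w ∈ s, u ≠ w → ({u, w} : Finset V) ∈ K.faces) → s ∈ K.faces

/-- A `k`-belt, dually: a chordless cycle `f 0, f 1, …, f (k-1)` in `K` spanning no
2-simplex.  The corresponding facets are pairwise distinct and only consecutive ones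
(in the cyclic order) intersect. -/
def IsBelt (K : SC V) (k : ℕ) (f : ZMod k → V) : Prop :=
  3 ≤ k ∧ Function.Injective f ∧
  (∀ i : ZMod k, ({f i, f (i + 1)} : Finset V) ∈ K.faces) ∧
  (∀ i j : ZMod k, i ≠ j → ({f i, f j} : Finset V) ∈ K.faces → (j = i + 1 ∨ i = j + 1)) ∧
  (∀ i j l : ZMod k, i ≠ j → j ≠ l → i ≠ l → ({f i, f j, f l} : Finset V) ∉ K.faces)

/-- `P` has a `k`-belt of facets. -/
def HasBelt (K : SC V) (k : ℕ) : Prop := ∃ f : ZMod k → V, IsBelt K k f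

/-- `K` is the boundary of the 3-simplex (dually, `P = Δ³`). -/
def IsSimplexBoundary (K : SC V) : Prop :=
  ∃ s : Finset V, s.card = 4 ∧ K.faces = {t | t ⊆ s ∧ t ≠ s}

/-- A Pogorelov polytope: a (simple 3-dimensional) flag polytope without 4-belts,
encoded via its dual simplicial 2-sphere. -/
def IsPogorelov (K : SC V) : Prop := IsFlag K ∧ ¬ HasBelt K 4

/-- The facet corresponding to `v`, having `K.vdeg v` edges, is surrounded by a
`(K.vdeg v)`-belt consisting exactly of the facets adjacent to it. -/
def VertexSurrounded (K : SC V) (v : V) : Prop :=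
  ∃ f : ZMod (K.vdeg v) → V, IsBelt K (K.vdeg v) f ∧
    Set.range f = {u | u ≠ v ∧ ({v, u} : Finset V) ∈ K.faces}

/-- Every 3-cycle of `K` bounds a face (no empty triangles). -/
def NoEmptyTriangle (K : SC V) : Prop :=
  ∀ a b c : V, a ≠ b → b ≠ c → a ≠ c →
    ({a, b} : Finset V) ∈ K.faces → ({b, c} : Finset V) ∈ K.faces →
    ({a, c} : Finset V) ∈ K.faces → ({a, b, c} : Finset V) ∈ K.faces

/-- `K` contains a chordless 4-cycle. -/
def HasChordless4 (K : SC V) : Prop :=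
  ∃ f : ZMod 4 → V, Function.Injective f ∧
    (∀ i : ZMod 4, ({f i, f (i + 1)} : Finset V) ∈ K.faces) ∧
    ({f 0, f 2} : Finset V) ∉ K.faces ∧ ({f 1, f 3} : Finset V) ∉ K.faces

end Sphere


section Helpers
variable {V : Type} [DecidableEq V]

lemma pair_subset_tri' (v u w : V) : ({v, u} : Finset V) ⊆ {v, u, w} := by
  intro z hz
  simp only [Finset.mem_insert, Finset.mem_singleton] at hz ⊢
  tauto

lemma tri_comm' (v u w : V) : ({v, u, w} : Finset V) = {v, w, u} := by
  rw [Finset.pair_comm u w]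

lemma tri_extract' {t : Finset V} {x y : V} (ht : t.card = 3) (hxy : x ≠ y)
    (hsub : ({x, y} : Finset V) ⊆ t) : ∃ z, z ≠ x ∧ z ≠ y ∧ t = {x, y, z} := by
  have hcard : ({x, y} : Finset V).card = 2 := Finset.card_pair hxy
  have hss : ({x, y} : Finset V) ⊂ t :=
    lt_of_le_of_ne hsub (by intro h; rw [← h] at ht; omega)
  obtain ⟨z, hzt, hz⟩ := Finset.exists_of_ssubset hss
  have hzx : z ≠ x := by intro h; exact hz (by simp [h])
  have hzy : z ≠ y := by intro h; exact hz (by simp [h])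
  refine ⟨z, hzx, hzy, ?_⟩
  have h1 : ({x, y, z} : Finset V) ⊆ t := by
    intro a ha
    simp only [Finset.mem_insert, Finset.mem_singleton] at ha
    rcases ha with rfl | rfl | rfl
    · exact hsub (by simp)
    · exact hsub (by simp)
    · exact hzt
  have h2 : ({x, y, z} : Finset V).card = 3 := by
    rw [show ({x, y, z} : Finset V) = insert z {x, y} by
      ext a; simp only [Finset.mem_insert, Finset.mem_singleton]; tauto]
    rw [Finset.card_insert_of_notMem (by
      simp only [Finset.mem_insert, Finset.mem_singleton]; push_neg; exact ⟨hzx, hzy⟩), hcard]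
  exact (Finset.eq_of_subset_of_card_le h1 (by omega)).symm

end Helpers

lemma cycle_of_two_regular {V : Type} [Fintype V] (N : Set V) (R : V → V → Prop)
    (hirr : ∀ u, ¬R u u)
    (hsym : ∀ u w, R u w → R w u)
    (hmemN : ∀ u w, R u w → u ∈ N ∧ w ∈ N)
    (htwo : ∀ u ∈ N, ∃ x y, x ≠ y ∧ {w | R u w} = {x, y})
    (u₀ : V) (hu₀ : u₀ ∈ N)
    (hconn : ∀ u ∈ N, Relation.ReflTransGen R u₀ u) :
    ∃ (f : ℕ → V) (p : ℕ), 3 ≤ p ∧ (∀ n, f (n + p) = f n) ∧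
      (∀ a b, a < p → b < p → f a = f b → a = b) ∧
      (∀ n, R (f n) (f (n + 1))) ∧
      Set.range f = N ∧
      (∀ n w, R (f (n + 1)) w → w = f n ∨ w = f (n + 2)) := by
  classical
  -- choose the two neighbours of each vertex of N
  have htwo' : ∀ u, ∃ xy : V × V, u ∈ N → xy.1 ≠ xy.2 ∧ {w | R u w} = {xy.1, xy.2} := by
    intro u
    by_cases h : u ∈ N
    · obtain ⟨x, y, hxy, hs⟩ := htwo u h
      exact ⟨(x, y), fun _ => ⟨hxy, hs⟩⟩
    · exact ⟨(u, u), fun h' => absurd h' h⟩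
  choose xy hxy using htwo'
  let other : V → V → V := fun u w => if (xy u).1 = w then (xy u).2 else (xy u).1
  have hR1 : ∀ u, u ∈ N → R u (xy u).1 := by
    intro u hu
    have : (xy u).1 ∈ {w | R u w} := by rw [(hxy u hu).2]; exact Set.mem_insert _ _
    exact this
  have hR2 : ∀ u, u ∈ N → R u (xy u).2 := by
    intro u hu
    have : (xy u).2 ∈ {w | R u w} := by rw [(hxy u hu).2]; exact Or.inr rfl
    exact this
  have hO : ∀ u, u ∈ N → ∀ w, R u w → R u (other u w) ∧ other u w ≠ w := by
    intro u hu w hw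
    by_cases h : (xy u).1 = w
    · have : other u w = (xy u).2 := by simp only [other, if_pos h]
      rw [this]
      exact ⟨hR2 u hu, by rw [← h]; exact (hxy u hu).1.symm⟩
    · have : other u w = (xy u).1 := by simp only [other, if_neg h]
      rw [this]
      exact ⟨hR1 u hu, h⟩
  have hO2 : ∀ u, u ∈ N → ∀ w w', R u w → R u w' → w' ≠ w → w' = other u w := by
    intro u hu w w' hw hw' hne
    obtain ⟨hneq, hs⟩ := hxy u hu
    have hwm : w ∈ ({(xy u).1, (xy u).2} : Set V) := by rw [← hs]; exact hw
    have hwm' : w' ∈ ({(xy u).1, (xy u).2} : Set V) := by rw [← hs]; exact hw'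
    simp only [Set.mem_insert_iff, Set.mem_singleton_iff] at hwm hwm'
    by_cases h : (xy u).1 = w
    · have : other u w = (xy u).2 := by simp only [other, if_pos h]
      rw [this]
      rcases hwm' with h' | h'
      · exact absurd (h'.trans h) hne
      · exact h'
    · have : other u w = (xy u).1 := by simp only [other, if_neg h]
      rw [this]
      rcases hwm with hw1 | hw1
      · exact absurd hw1.symm h
      rcases hwm' with h' | h'
      · exact h'
      · exact absurd (h'.trans hw1.symm) hne
  -- the walk
  let g : ℕ → V × V := fun n =>
    Nat.rec (motive := fun _ => V × V) (u₀, (xy u₀).1) (fun _ q => (q.2, other q.2 q.1)) n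
  let f : ℕ → V := fun n => (g n).1
  have hf1 : ∀ n, f (n + 1) = (g n).2 := fun n => rfl
  have hrec : ∀ n, f (n + 2) = other (f (n + 1)) (f n) := fun n => rfl
  have E : ∀ a b : ℕ, a = b → f a = f b := fun a b h => by rw [h]
  have hW : ∀ n, R (f n) (f (n + 1)) := by
    intro n
    induction n with
    | zero => exact hR1 u₀ hu₀
    | succ n ih =>
      have hu : f (n + 1) ∈ N := (hmemN _ _ ih).2
      show R (f (n + 1)) (other (f (n + 1)) (f n))
      exact (hO (f (n + 1)) hu (f n) (hsym _ _ ih)).1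
  have fN : ∀ n, f n ∈ N := fun n => (hmemN _ _ (hW n)).1
  have hWne2 : ∀ n, f (n + 2) ≠ f n := by
    intro n
    have hu : f (n + 1) ∈ N := (hmemN _ _ (hW n)).2
    show other (f (n + 1)) (f n) ≠ f n
    exact (hO (f (n + 1)) hu (f n) (hsym _ _ (hW n))).2
  have hfne : ∀ n, f (n + 1) ≠ f n := fun n h => hirr (f n) (h ▸ hW n)
  have hRD : ∀ n, f n = other (f (n + 1)) (f (n + 2)) := by
    intro n
    have hu : f (n + 1) ∈ N := (hmemN _ _ (hW n)).2
    exact hO2 (f (n + 1)) hu (f (n + 2)) (f n) (hW (n + 1)) (hsym _ _ (hW n)) (hWne2 n).symm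
  -- forward determinism
  have hFD : ∀ a b, f a = f b → f (a + 1) = f (b + 1) →
      ∀ t, f (a + t) = f (b + t) ∧ f (a + t + 1) = f (b + t + 1) := by
    intro a b h0 h1 t
    induction t with
    | zero => exact ⟨h0, h1⟩
    | succ t ih =>
      constructor
      · show f (a + t + 1) = f (b + t + 1)
        exact ih.2
      · show f (a + t + 2) = f (b + t + 2)
        rw [hrec (a + t), hrec (b + t), ih.1, ih.2]
  -- from one coincidence of consecutive pairs, get a global period
  have periodify : ∀ a d, 0 < d → f a = f (a + d) → f (a + 1) = f (a + d + 1) →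
      ∀ n, f (n + d) = f n := by
    intro a d hd h0 h1 n
    have fwd : ∀ t, f (a + t) = f (a + d + t) ∧ f (a + t + 1) = f (a + d + t + 1) :=
      hFD a (a + d) h0 h1
    rcases le_or_gt a n with h | h
    · obtain ⟨t, rfl⟩ := Nat.exists_eq_add_of_le h
      have := (fwd t).1
      rw [E (a + t + d) (a + d + t) (by omega)]
      exact this.symm
    · have down : ∀ j, f (a - j + d) = f (a - j) ∧ f (a - j + d + 1) = f (a - j + 1) := by
        intro j
        induction j with
        | zero =>
          constructor
          · exact h0.symm
          · show f (a + d + 1) = f (a + 1)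
            exact h1.symm
        | succ j ih =>
          by_cases hj : a ≤ j
          · have e1 : a - (j + 1) = a - j := by omega
            rw [e1]
            exact ih
          · set m := a - (j + 1) with hm
            have hm1 : a - j = m + 1 := by omega
            rw [hm1] at ih
            have A : f (m + d + 1) = f (m + 1) :=
              (E (m + d + 1) (m + 1 + d) (by omega)).trans ih.1
            have B : f (m + d + 2) = f (m + 2) :=
              (E (m + d + 2) (m + 1 + d + 1) (by omega)).trans
                (ih.2.trans (E (m + 1 + 1) (m + 2) (by omega)))
            constructor
            · rw [hRD (m + d), A, B]
              exact (hRD m).symm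
            · exact A
      have e : a - (a - n) = n := by omega
      have := (down (a - n)).1
      rw [e] at this
      exact this
  -- existence of a period
  have hexists : ∃ p, 0 < p ∧ ∀ n, f (n + p) = f n := by
    obtain ⟨m, n, hmn, hg⟩ := Finite.exists_ne_map_eq_of_infinite g
    have key : ∀ m n : ℕ, m < n → g m = g n → ∃ p, 0 < p ∧ ∀ n', f (n' + p) = f n' := by
      intro m n hlt hg
      refine ⟨n - m, by omega, periodify m (n - m) (by omega) ?_ ?_⟩
      · rw [E (m + (n - m)) n (by omega)]
        exact congrArg Prod.fst hg
      · rw [E (m + (n - m) + 1) (n + 1) (by omega)]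
        rw [hf1 m, hf1 n]
        exact congrArg Prod.snd hg
    rcases Nat.lt_or_gt_of_ne hmn with h | h
    · exact key m n h hg
    · exact key n m h hg.symm
  set p := Nat.find hexists with hpdef
  obtain ⟨hppos, hper⟩ := Nat.find_spec hexists
  rw [← hpdef] at hppos hper
  have hpmin : ∀ q, 0 < q → (∀ n, f (n + q) = f n) → p ≤ q :=
    fun q h1 h2 => Nat.find_min' hexists ⟨h1, h2⟩
  -- injectivity on [0, p)
  have hinj : ∀ a b, a < p → b < p → f a = f b → a = b := by
    intro a b ha hb hab
    by_contra hne
    have key : ∀ a b : ℕ, a < b → b < p → f a = f b → False := by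
      intro a b hlt hbp heq
      set d := b - a with hd
      have hd0 : 0 < d := by omega
      have hdp : d < p := by omega
      by_cases hcase : f (a + 1) = f (b + 1)
      · have hper2 : ∀ n, f (n + d) = f n := by
          apply periodify a d hd0
          · exact heq.trans (E b (a + d) (by omega))
          · exact hcase.trans (E (b + 1) (a + d + 1) (by omega))
        exact absurd (hpmin d hd0 hper2) (by omega)
      · have hRb : R (f b) (f (b + 1)) := hW b
        have hRb' : R (f b) (f (b - 1)) := by
          have h' := hsym _ _ (hW (b - 1))
          rw [E (b - 1 + 1) b (by omega)] at h'
          exact h'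
        have hRa : R (f b) (f (a + 1)) := by
          rw [← heq]; exact hW a
        have hbN : f b ∈ N := (hmemN _ _ hRb).1
        have e1 : f (a + 1) = other (f b) (f (b + 1)) :=
          hO2 (f b) hbN (f (b + 1)) (f (a + 1)) hRb hRa hcase
        have e2 : f (b - 1) = other (f b) (f (b + 1)) := by
          apply hO2 (f b) hbN (f (b + 1)) (f (b - 1)) hRb hRb'
          have h' := hWne2 (b - 1)
          rw [E (b - 1 + 2) (b + 1) (by omega)] at h'
          exact h'.symm
        have hrefl0 : f (a + 1) = f (b - 1) := e1.trans e2.symm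
        have refl : ∀ n, a + n + 1 ≤ b → f (a + n) = f (b - n) ∧ f (a + n + 1) = f (b - n - 1) := by
          intro n
          induction n with
          | zero => exact fun _ => ⟨heq, hrefl0⟩
          | succ n ih =>
            intro h
            have ih' := ih (by omega)
            constructor
            · show f (a + n + 1) = f (b - (n + 1))
              rw [E (b - (n + 1)) (b - n - 1) (by omega)]
              exact ih'.2
            · show f (a + n + 2) = f (b - (n + 1) - 1)
              have h1 : f (a + n + 2) = other (f (a + n + 1)) (f (a + n)) := hrec (a + n)
              have h2 : f (b - n - 2) = other (f (b - n - 1)) (f (b - n)) := by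
                have h' := hRD (b - n - 2)
                rw [E (b - n - 2 + 1) (b - n - 1) (by omega),
                    E (b - n - 2 + 2) (b - n) (by omega)] at h'
                exact h'
              rw [E (b - (n + 1) - 1) (b - n - 2) (by omega), h1, ih'.1, ih'.2]
              exact h2.symm
        rcases Nat.even_or_odd d with ⟨m, hm⟩ | ⟨m, hm⟩
        · have hm1 : 1 ≤ m := by omega
          have h1 := (refl (m - 1) (by omega)).1
          rw [E (b - (m - 1)) (a + m + 1) (by omega)] at h1
          exact hWne2 (a + (m - 1)) (by
            rw [E (a + (m - 1) + 2) (a + m + 1) (by omega)]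
            exact h1.symm)
        · have h1 := (refl m (by omega)).1
          rw [E (b - m) (a + m + 1) (by omega)] at h1
          exact hfne (a + m) h1.symm
    rcases Nat.lt_or_gt_of_ne hne with h | h
    · exact key a b h hb hab
    · exact key b a h ha hab.symm
  -- neighbours along the walk
  have hdet : ∀ n w, R (f (n + 1)) w → w = f n ∨ w = f (n + 2) := by
    intro n w hw
    have huN : f (n + 1) ∈ N := (hmemN _ _ hw).1
    obtain ⟨hne, hs⟩ := hxy (f (n + 1)) huN
    have h1 : f n ∈ ({(xy (f (n + 1))).1, (xy (f (n + 1))).2} : Set V) := by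
      rw [← hs]; exact hsym _ _ (hW n)
    have h2 : f (n + 2) ∈ ({(xy (f (n + 1))).1, (xy (f (n + 1))).2} : Set V) := by
      rw [← hs]; exact hW (n + 1)
    have h3 : w ∈ ({(xy (f (n + 1))).1, (xy (f (n + 1))).2} : Set V) := by
      rw [← hs]; exact hw
    have h4 : f n ≠ f (n + 2) := (hWne2 n).symm
    simp only [Set.mem_insert_iff, Set.mem_singleton_iff] at h1 h2 h3
    rcases h3 with h3 | h3 <;> rcases h1 with h1 | h1 <;> rcases h2 with h2 | h2
    · exact Or.inl (h3.trans h1.symm)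
    · exact Or.inl (h3.trans h1.symm)
    · exact Or.inr (h3.trans h2.symm)
    · exact absurd (h1.trans h2.symm) h4
    · exact absurd (h1.trans h2.symm) h4
    · exact Or.inr (h3.trans h2.symm)
    · exact Or.inl (h3.trans h1.symm)
    · exact Or.inl (h3.trans h1.symm)
  -- range
  have hrange : Set.range f = N := by
    ext u
    constructor
    · rintro ⟨n, rfl⟩
      exact fN n
    · intro hu
      have main : ∀ w, Relation.ReflTransGen R u₀ w → w ∈ Set.range f := by
        intro w hw
        induction hw with
        | refl => exact ⟨0, rfl⟩
        | @tail b c hsteps hstep ih =>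
          obtain ⟨n, hn⟩ := ih
          have hc : R (f (n + p - 1 + 1)) c := by
            rw [E (n + p - 1 + 1) (n + p) (by omega), hper n, hn]
            exact hstep
          rcases hdet (n + p - 1) c hc with h | h
          · exact ⟨n + p - 1, h.symm⟩
          · exact ⟨n + p - 1 + 2, h.symm⟩
      exact main u (hconn u hu)
  -- p ≥ 3
  have hp3 : 3 ≤ p := by
    by_contra h
    rcases (by omega : p = 1 ∨ p = 2) with hp | hp
    · exact hfne 0 (by have := hper 0; rw [hp] at this; exact this)
    · exact hWne2 0 (by have := hper 0; rw [hp] at this; exact this)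
  exact ⟨f, p, hp3, hper, hinj, hW, hrange, hdet⟩
section Lnk
variable {V : Type} [DecidableEq V] [Fintype V]

lemma lnk_two (K : SC V) (hS : IsSphere2 K) (v u : V) (hu : u ≠ v)
    (he : ({v, u} : Finset V) ∈ K.faces) :
    ∃ x y : V, x ≠ y ∧ {w | w ≠ v ∧ w ≠ u ∧ ({v, u, w} : Finset V) ∈ K.faces} = {x, y} := by
  classical
  obtain ⟨h1, h2, h3, h4, h5, h6, h7⟩ := hS
  set L : Set V := {w | w ≠ v ∧ w ≠ u ∧ ({v, u, w} : Finset V) ∈ K.faces} with hL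
  have hcard2 : ({v, u} : Finset V).card = 2 := Finset.card_pair (Ne.symm hu)
  have himg : {t | t ∈ K.faces ∧ t.card = 3 ∧ ({v, u} : Finset V) ⊆ t}
      = (fun w => ({v, u, w} : Finset V)) '' L := by
    ext t
    constructor
    · rintro ⟨htf, htc, hts⟩
      obtain ⟨z, hzv, hzu, hteq⟩ := tri_extract' htc (Ne.symm hu) hts
      exact ⟨z, ⟨hzv, hzu, hteq ▸ htf⟩, hteq.symm⟩
    · rintro ⟨w, ⟨hwv, hwu, hwf⟩, rfl⟩
      refine ⟨hwf, ?_, pair_subset_tri' v u w⟩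
      rw [Finset.card_insert_of_notMem (by
            simp only [Finset.mem_insert, Finset.mem_singleton]
            push_neg
            exact ⟨Ne.symm hu, Ne.symm hwv⟩),
          Finset.card_pair (Ne.symm hwu)]
  have hinjOn : Set.InjOn (fun w => ({v, u, w} : Finset V)) L := by
    rintro w1 ⟨h1v, h1u, _⟩ w2 ⟨h2v, h2u, _⟩ heq
    have hw2 : w2 ∈ ({v, u, w1} : Finset V) := by
      rw [show ({v, u, w1} : Finset V) = {v, u, w2} from heq]
      simp
    simp only [Finset.mem_insert, Finset.mem_singleton] at hw2
    rcases hw2 with h | h | h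
    · exact absurd h h2v
    · exact absurd h h2u
    · exact h.symm
  have hT := h4 {v, u} he hcard2
  rw [himg, Set.ncard_image_of_injOn hinjOn] at hT
  obtain ⟨x, y, hxy, hLxy⟩ := Set.ncard_eq_two.mp hT
  exact ⟨x, y, hxy, hLxy⟩

end Lnk
section Main
variable {V : Type} [DecidableEq V] [Fintype V]

lemma surrounded_triangle (K : SC V) (hS : IsSphere2 K) (hB : ∀ v : V, VertexSurrounded K v) :
    ∀ a b c : V, a ≠ b → a ≠ c → b ≠ c →
      ({a, b} : Finset V) ∈ K.faces → ({a, c} : Finset V) ∈ K.faces →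
      ({b, c} : Finset V) ∈ K.faces → ({a, b, c} : Finset V) ∈ K.faces := by
  obtain ⟨h1, h2, h3, h4, h5, h6, h7⟩ := hS
  intro a b c hab hac hbc eab eac ebc
  obtain ⟨F, ⟨hk3, hFinj, hFedge, hFchord, hFtri⟩, hFrange⟩ := hB a
  have hbR : b ∈ Set.range F := by rw [hFrange]; exact ⟨Ne.symm hab, eab⟩
  have hcR : c ∈ Set.range F := by rw [hFrange]; exact ⟨Ne.symm hac, eac⟩
  obtain ⟨i, hi⟩ := hbR
  obtain ⟨j, hj⟩ := hcR
  have hij : i ≠ j := fun h => hbc (by rw [← hi, ← hj, h])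
  have claim : ∀ i : ZMod (K.vdeg a), ({a, F i, F (i + 1)} : Finset V) ∈ K.faces := by
    intro i
    have hFiN : F i ∈ Set.range F := ⟨i, rfl⟩
    rw [hFrange] at hFiN
    obtain ⟨hFia, hedge⟩ := hFiN
    have h2tri := h4 {a, F i} hedge (Finset.card_pair (Ne.symm hFia))
    obtain ⟨t1, t2, ht12, hT⟩ := Set.ncard_eq_two.mp h2tri
    have ht1 : t1 ∈ K.faces ∧ t1.card = 3 ∧ ({a, F i} : Finset V) ⊆ t1 := by
      have : t1 ∈ {t | t ∈ K.faces ∧ t.card = 3 ∧ ({a, F i} : Finset V) ⊆ t} := by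
        rw [hT]; exact Set.mem_insert _ _
      exact this
    have ht2 : t2 ∈ K.faces ∧ t2.card = 3 ∧ ({a, F i} : Finset V) ⊆ t2 := by
      have : t2 ∈ {t | t ∈ K.faces ∧ t.card = 3 ∧ ({a, F i} : Finset V) ⊆ t} := by
        rw [hT]; exact Or.inr rfl
      exact this
    have analyze : ∀ t, t ∈ K.faces → t.card = 3 → ({a, F i} : Finset V) ⊆ t →
        ∃ z, (z = F (i + 1) ∨ z = F (i - 1)) ∧ t = {a, F i, z} := by
      intro t htf htc hts
      obtain ⟨z, hza, hzFi, hteq⟩ := tri_extract' htc (Ne.symm hFia) hts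
      have hzN : z ∈ Set.range F := by
        rw [hFrange]
        refine ⟨hza, K.down_closed _ htf _ ?_⟩
        rw [hteq]
        intro w hw
        simp only [Finset.mem_insert, Finset.mem_singleton] at hw ⊢
        tauto
      obtain ⟨m, hm⟩ := hzN
      have hedge2 : ({F i, z} : Finset V) ∈ K.faces := by
        refine K.down_closed _ htf _ ?_
        rw [hteq]
        intro w hw
        simp only [Finset.mem_insert, Finset.mem_singleton] at hw ⊢
        tauto
      have hmi : m ≠ i := fun h => hzFi (by rw [← hm, h])
      have hch := hFchord i m (Ne.symm hmi) (by rw [hm]; exact hedge2)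
      rcases hch with h | h
      · exact ⟨z, Or.inl (by rw [← hm, h]), hteq⟩
      · exact ⟨z, Or.inr (by rw [← hm, show m = i - 1 from by rw [h]; ring]), hteq⟩
    obtain ⟨z1, hz1, ht1eq⟩ := analyze t1 ht1.1 ht1.2.1 ht1.2.2
    obtain ⟨z2, hz2, ht2eq⟩ := analyze t2 ht2.1 ht2.2.1 ht2.2.2
    have hz12 : z1 ≠ z2 := fun h => ht12 (by rw [ht1eq, ht2eq, h])
    rcases hz1 with h | h
    · have := ht1.1
      rw [ht1eq, h] at this
      exact this
    rcases hz2 with h2' | h2'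
    · have := ht2.1
      rw [ht2eq, h2'] at this
      exact this
    · exact absurd (h.trans h2'.symm) hz12
  rcases hFchord i j hij (by rw [hi, hj]; exact ebc) with h | h
  · have := claim i
    rw [← h, hi, hj] at this
    exact this
  · have := claim j
    rw [← h, hj, hi] at this
    rw [tri_comm'] at this
    exact this

end Main
section Main2
variable {V : Type} [DecidableEq V] [Fintype V]

lemma surrounded_flag (K : SC V) (hS : IsSphere2 K) (hB : ∀ v : V, VertexSurrounded K v) :
    IsFlag K := by
  have htri := surrounded_triangle K hS hB
  have hK4 : ∀ a b c d : V, a ≠ b → a ≠ c → a ≠ d → b ≠ c → b ≠ d → c ≠ d →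
      ({a, b} : Finset V) ∈ K.faces → ({a, c} : Finset V) ∈ K.faces →
      ({a, d} : Finset V) ∈ K.faces → ({b, c} : Finset V) ∈ K.faces →
      ({b, d} : Finset V) ∈ K.faces → ({c, d} : Finset V) ∈ K.faces → False := by
    intro a b c d hab hac had hbc hbd hcd eab eac ead ebc ebd ecd
    obtain ⟨F, ⟨hk3, hFinj, hFedge, hFchord, hFtri⟩, hFrange⟩ := hB a
    have hbR : b ∈ Set.range F := by rw [hFrange]; exact ⟨Ne.symm hab, eab⟩
    have hcR : c ∈ Set.range F := by rw [hFrange]; exact ⟨Ne.symm hac, eac⟩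
    have hdR : d ∈ Set.range F := by rw [hFrange]; exact ⟨Ne.symm had, ead⟩
    obtain ⟨i, hi⟩ := hbR
    obtain ⟨j, hj⟩ := hcR
    obtain ⟨l, hl⟩ := hdR
    have hij : i ≠ j := fun h => hbc (by rw [← hi, ← hj, h])
    have hjl : j ≠ l := fun h => hcd (by rw [← hj, ← hl, h])
    have hil : i ≠ l := fun h => hbd (by rw [← hi, ← hl, h])
    have hbcd : ({b, c, d} : Finset V) ∈ K.faces := htri b c d hbc hbd hcd ebc ebd ecd
    exact hFtri i j l hij hjl hil (by rw [hi, hj, hl]; exact hbcd)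
  intro s hne hsing hpair
  have hc1 : 1 ≤ s.card := hne.card_pos
  by_cases h4c : 4 ≤ s.card
  · exfalso
    obtain ⟨t, hts, htc⟩ := Finset.exists_subset_card_eq h4c
    obtain ⟨a, ha⟩ : t.Nonempty := by rw [← Finset.card_pos, htc]; omega
    have h3c : (t.erase a).card = 3 := by rw [Finset.card_erase_of_mem ha, htc]
    obtain ⟨b, c, d, hbc, hbd, hcd, herase⟩ := Finset.card_eq_three.mp h3c
    have hb : b ∈ t.erase a := by rw [herase]; simp
    have hc : c ∈ t.erase a := by rw [herase]; simp
    have hd : d ∈ t.erase a := by rw [herase]; simp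
    have hax : ∀ x, x ∈ t.erase a → x ∈ s ∧ a ≠ x := fun x hx =>
      ⟨hts (Finset.mem_of_mem_erase hx), (Finset.ne_of_mem_erase hx).symm⟩
    have has : a ∈ s := hts ha
    have hbs := hax b hb
    have hcs := hax c hc
    have hds := hax d hd
    exact hK4 a b c d hbs.2 hcs.2 hds.2 hbc hbd hcd
      (hpair a has b hbs.1 hbs.2) (hpair a has c hcs.1 hcs.2) (hpair a has d hds.1 hds.2)
      (hpair b hbs.1 c hcs.1 hbc) (hpair b hbs.1 d hds.1 hbd) (hpair c hcs.1 d hds.1 hcd)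
  · have hcases : s.card = 1 ∨ s.card = 2 ∨ s.card = 3 := by omega
    rcases hcases with h | h | h
    · obtain ⟨u, rfl⟩ := Finset.card_eq_one.mp h
      exact hsing u (by simp)
    · obtain ⟨u, w, huw, rfl⟩ := Finset.card_eq_two.mp h
      exact hpair u (by simp) w (by simp) huw
    · obtain ⟨u, w, z, huw, huz, hwz, rfl⟩ := Finset.card_eq_three.mp h
      exact htri u w z huw huz hwz
        (hpair u (by simp) w (by simp) huw) (hpair u (by simp) z (by simp) huz)
        (hpair w (by simp) z (by simp) hwz)

end Main2
section Main3
variable {V : Type} [DecidableEq V] [Fintype V]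

lemma flag_surrounded (K : SC V) (hS : IsSphere2 K) (hF : IsFlag K) (v : V) :
    VertexSurrounded K v := by
  classical
  obtain ⟨h1, h2, h3, h4, h5, h6, h7⟩ := id hS
  set N : Set V := {u | u ≠ v ∧ ({v, u} : Finset V) ∈ K.faces} with hN
  set R : V → V → Prop :=
    fun u w => u ≠ v ∧ w ≠ v ∧ u ≠ w ∧ ({v, u, w} : Finset V) ∈ K.faces with hRdef
  have hsym : ∀ u w, R u w → R w u := by
    rintro u w ⟨a1, a2, a3, a4⟩
    exact ⟨a2, a1, a3.symm, by rwa [tri_comm'] at a4⟩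
  have hirr : ∀ u, ¬R u u := by rintro u ⟨_, _, h, _⟩; exact h rfl
  have hmemN : ∀ u w, R u w → u ∈ N ∧ w ∈ N := by
    rintro u w ⟨huv, hwv, huw, ht⟩
    constructor
    · exact ⟨huv, K.down_closed _ ht _ (pair_subset_tri' v u w)⟩
    · refine ⟨hwv, K.down_closed _ ht _ ?_⟩
      intro z hz
      simp only [Finset.mem_insert, Finset.mem_singleton] at hz ⊢
      tauto
  have htwoR : ∀ u ∈ N, ∃ x y, x ≠ y ∧ {w | R u w} = {x, y} := by
    intro u hu
    obtain ⟨x, y, hxy, hset⟩ := lnk_two K hS v u hu.1 hu.2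
    refine ⟨x, y, hxy, ?_⟩
    rw [← hset]
    ext w
    simp only [Set.mem_setOf_eq, hRdef]
    constructor
    · rintro ⟨huv, hwv, huw, ht⟩
      exact ⟨hwv, Ne.symm huw, ht⟩
    · rintro ⟨hwv, hwu, ht⟩
      exact ⟨hu.1, hwv, Ne.symm hwu, ht⟩
  -- base point u₀
  obtain ⟨t₀, ht₀f, ht₀s, ht₀c⟩ := h3 {v} (h1 v)
  have hvt₀ : v ∈ t₀ := ht₀s (by simp)
  obtain ⟨u₀, hu₀t, hu₀v⟩ : ∃ z ∈ t₀, z ≠ v := by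
    have hne : (t₀.erase v).Nonempty := by
      rw [← Finset.card_pos, Finset.card_erase_of_mem hvt₀, ht₀c]
      omega
    obtain ⟨z, hz⟩ := hne
    exact ⟨z, Finset.mem_of_mem_erase hz, Finset.ne_of_mem_erase hz⟩
  have hsub0 : ({v, u₀} : Finset V) ⊆ t₀ := by
    intro z hz
    simp only [Finset.mem_insert, Finset.mem_singleton] at hz
    rcases hz with rfl | rfl
    · exact hvt₀
    · exact hu₀t
  obtain ⟨w₀, hw₀v, hw₀u, ht₀eq⟩ := tri_extract' ht₀c (Ne.symm hu₀v) hsub0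
  have hu₀N : u₀ ∈ N := ⟨hu₀v, K.down_closed _ ht₀f _ hsub0⟩
  -- connectivity of the link
  have hconn : ∀ u ∈ N, Relation.ReflTransGen R u₀ u := by
    intro u hu
    obtain ⟨t, htf, hts, htc⟩ := h3 {v, u} hu.2
    have hvt : v ∈ t := hts (by simp)
    have hchain := h5 v t₀ t ht₀f htf ht₀c htc hvt₀ hvt
    have main : ∀ t' : Finset V,
        Relation.ReflTransGen
          (fun a b => a ∈ K.faces ∧ b ∈ K.faces ∧ a.card = 3 ∧ b.card = 3 ∧
            v ∈ a ∧ v ∈ b ∧ (a ∩ b).card = 2) t₀ t' →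
        ∀ z ∈ t', z ≠ v → Relation.ReflTransGen R u₀ z := by
      intro t' hch
      induction hch with
      | refl =>
        intro z hz hzv
        rw [ht₀eq] at hz
        simp only [Finset.mem_insert, Finset.mem_singleton] at hz
        rcases hz with rfl | rfl | rfl
        · exact absurd rfl hzv
        · exact Relation.ReflTransGen.refl
        · exact Relation.ReflTransGen.single ⟨hu₀v, hw₀v, Ne.symm hw₀u, ht₀eq ▸ ht₀f⟩
      | @tail b c hbc hstep ih =>
        intro z hz hzv
        obtain ⟨hbf, hcf, hb3, hc3, hvb, hvc, hbc2⟩ := hstep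
        have hvbc : v ∈ b ∩ c := Finset.mem_inter.mpr ⟨hvb, hvc⟩
        obtain ⟨z₀, hz₀⟩ : ∃ z₀, z₀ ∈ (b ∩ c).erase v := by
          have : ((b ∩ c).erase v).Nonempty := by
            rw [← Finset.card_pos, Finset.card_erase_of_mem hvbc, hbc2]
            omega
          exact this
        have hz₀v : z₀ ≠ v := Finset.ne_of_mem_erase hz₀
        have hz₀bc := Finset.mem_of_mem_erase hz₀
        have hz₀b : z₀ ∈ b := (Finset.mem_inter.mp hz₀bc).1
        have hz₀c : z₀ ∈ c := (Finset.mem_inter.mp hz₀bc).2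
        have hreach₀ : Relation.ReflTransGen R u₀ z₀ := ih z₀ hz₀b hz₀v
        have hsubc : ({v, z₀} : Finset V) ⊆ c := by
          intro w hw
          simp only [Finset.mem_insert, Finset.mem_singleton] at hw
          rcases hw with rfl | rfl
          · exact hvc
          · exact hz₀c
        obtain ⟨w, hwv, hwz, hceq⟩ := tri_extract' hc3 (Ne.symm hz₀v) hsubc
        rw [hceq] at hz
        simp only [Finset.mem_insert, Finset.mem_singleton] at hz
        rcases hz with rfl | rfl | rfl
        · exact absurd rfl hzv
        · exact hreach₀
        · exact hreach₀.tail ⟨hz₀v, hwv, Ne.symm hwz, hceq ▸ hcf⟩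
    have hut : u ∈ t := hts (by simp)
    exact main t hchain u hut hu.1
  -- extract the cycle
  obtain ⟨f, p, hp3, hper, hinj, hW, hrange, hdet⟩ :=
    cycle_of_two_regular N R hirr hsym hmemN htwoR u₀ hu₀N hconn
  have E : ∀ a b : ℕ, a = b → f a = f b := fun a b h => by rw [h]
  have fN : ∀ n, f n ∈ N := fun n => (hmemN _ _ (hW n)).1
  have hmul : ∀ n t, f (n + p * t) = f n := by
    intro n t
    induction t with
    | zero => exact E _ _ (by omega)
    | succ t ih =>
      calc f (n + p * (t + 1)) = f (n + p * t + p) := E _ _ (by ring)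
        _ = f (n + p * t) := hper _
        _ = f n := ih
  have fmod : ∀ n, f (n % p) = f n :=
    fun n => (hmul (n % p) (n / p)).symm.trans (E _ _ (Nat.mod_add_div n p))
  -- vdeg v = p
  have hk : K.vdeg v = p := by
    have himg2 : N = f '' ↑(Finset.range p) := by
      ext u
      constructor
      · intro hu
        rw [← hrange] at hu
        obtain ⟨n, rfl⟩ := hu
        exact ⟨n % p, by simp only [Finset.coe_range, Set.mem_Iio]; exact Nat.mod_lt n (by omega),
          fmod n⟩
      · rintro ⟨n, _, rfl⟩
        rw [← hrange]
        exact ⟨n, rfl⟩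
    have : K.vdeg v = N.ncard := rfl
    rw [this, himg2, Set.ncard_image_of_injOn (by
        intro a ha b hb hab
        simp only [Finset.coe_range, Set.mem_Iio] at ha hb
        exact hinj a b ha hb hab),
      Set.ncard_coe_finset, Finset.card_range]
  show VertexSurrounded K v
  unfold VertexSurrounded
  rw [hk]
  haveI : NeZero p := ⟨by omega⟩
  haveI : Fact (1 < p) := ⟨by omega⟩
  have hcasteq : ∀ a b : ℕ, f a = f b → (a : ZMod p) = (b : ZMod p) := by
    intro a b hab
    have hmod : a % p = b % p :=
      hinj _ _ (Nat.mod_lt _ (by omega)) (Nat.mod_lt _ (by omega))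
        ((fmod a).trans (hab.trans (fmod b).symm))
    rw [← Nat.mod_add_div a p, ← Nat.mod_add_div b p]
    push_cast
    rw [hmod, ZMod.natCast_self]
    ring
  have hvalcast : ∀ i : ZMod p, ((i.val : ℕ) : ZMod p) = i := fun i => ZMod.natCast_rightInverse i
  have Finj : ∀ i j : ZMod p, f i.val = f j.val → i = j := by
    intro i j h
    have := hinj i.val j.val (ZMod.val_lt i) (ZMod.val_lt j) h
    rw [← hvalcast i, ← hvalcast j, this]
  refine ⟨fun i : ZMod p => f i.val, ⟨hp3, ?_, ?_, ?_, ?_⟩, ?_⟩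
  · -- injective
    intro i j h
    exact Finj i j h
  · -- edges
    intro i
    have hval : (i + 1).val = (i.val + 1) % p := by
      rw [ZMod.val_add, ZMod.val_one]
    show ({f i.val, f ((i + 1).val)} : Finset V) ∈ K.faces
    rw [hval, fmod]
    obtain ⟨_, _, _, htri⟩ := hW i.val
    refine K.down_closed _ htri _ ?_
    intro z hz
    simp only [Finset.mem_insert, Finset.mem_singleton] at hz ⊢
    tauto
  · -- chordless
    intro i j hij hface
    have hiN := fN i.val
    have hjN := fN j.val
    have hne : f i.val ≠ f j.val := fun h => hij (Finj i j h)
    have htri : ({v, f i.val, f j.val} : Finset V) ∈ K.faces := by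
      apply hF
      · exact ⟨v, by simp⟩
      · intro u hu
        simp only [Finset.mem_insert, Finset.mem_singleton] at hu
        rcases hu with rfl | rfl | rfl <;> exact h1 _
      · intro x hx y hy hxy
        simp only [Finset.mem_insert, Finset.mem_singleton] at hx hy
        have edgei : ({v, f i.val} : Finset V) ∈ K.faces := hiN.2
        have edgej : ({v, f j.val} : Finset V) ∈ K.faces := hjN.2
        rcases hx with rfl | rfl | rfl <;> rcases hy with rfl | rfl | rfl
        · exact absurd rfl hxy
        · exact edgei
        · exact edgej
        · rw [Finset.pair_comm]; exact edgei
        · exact absurd rfl hxy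
        · exact hface
        · rw [Finset.pair_comm]; exact edgej
        · rw [Finset.pair_comm]; exact hface
        · exact absurd rfl hxy
    have RF : R (f i.val) (f j.val) := ⟨hiN.1, hjN.1, hne, htri⟩
    have hshift : f (i.val + p - 1 + 1) = f i.val := by
      rw [E _ (i.val + p) (by omega)]
      exact hper _
    have hd := hdet (i.val + p - 1) (f j.val) (by rw [hshift]; exact RF)
    rcases hd with h | h
    · right
      have hc := hcasteq j.val (i.val + p - 1) h
      have e2 : (i.val + p - 1 : ℕ) = i.val + (p - 1) := by omega
      rw [e2, Nat.cast_add] at hc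
      have e3 : ((p - 1 : ℕ) : ZMod p) = -1 := by
        have : ((p - 1 : ℕ) : ZMod p) + 1 = 0 := by
          rw [show (1 : ZMod p) = ((1 : ℕ) : ZMod p) by push_cast; rfl, ← Nat.cast_add,
            show p - 1 + 1 = p by omega, ZMod.natCast_self]
        exact eq_neg_of_add_eq_zero_left this
      rw [e3, hvalcast i, hvalcast j] at hc
      rw [hc]
      ring
    · left
      have hc := hcasteq j.val (i.val + p - 1 + 2) h
      have e2 : (i.val + p - 1 + 2 : ℕ) = i.val + p + 1 := by omega
      rw [e2] at hc
      push_cast at hc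
      rw [ZMod.natCast_self, hvalcast i, hvalcast j] at hc
      rw [hc]
      ring
  · -- no triangle among the belt
    intro i j l hij hjl hil hmem
    exfalso
    have hiN := fN i.val
    have hjN := fN j.val
    have hlN := fN l.val
    have hij' : f i.val ≠ f j.val := fun h => hij (Finj i j h)
    have hjl' : f j.val ≠ f l.val := fun h => hjl (Finj j l h)
    have hil' : f i.val ≠ f l.val := fun h => hil (Finj i l h)
    have hvmem : ∀ x : V, x = f i.val ∨ x = f j.val ∨ x = f l.val →
        ({v, x} : Finset V) ∈ K.faces := by
      rintro x (rfl | rfl | rfl)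
      · exact hiN.2
      · exact hjN.2
      · exact hlN.2
    have htt : ∀ x y : V, (x = f i.val ∨ x = f j.val ∨ x = f l.val) →
        (y = f i.val ∨ y = f j.val ∨ y = f l.val) → ({x, y} : Finset V) ∈ K.faces := by
      intro x y hx hy
      refine K.down_closed _ hmem _ ?_
      intro z hz
      simp only [Finset.mem_insert, Finset.mem_singleton] at hz ⊢
      rcases hz with rfl | rfl
      · exact hx
      · exact hy
    set s : Finset V := insert v {f i.val, f j.val, f l.val} with hs
    have hsf : s ∈ K.faces := by
      apply hF
      · exact ⟨v, by simp [hs]⟩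
      · intro u hu
        exact h1 _
      · intro x hx y hy hxy
        simp only [hs, Finset.mem_insert, Finset.mem_singleton] at hx hy
        rcases hx with rfl | hx
        · rcases hy with rfl | hy
          · exact absurd rfl hxy
          · exact hvmem y hy
        · rcases hy with rfl | hy
          · rw [Finset.pair_comm]; exact hvmem x hx
          · exact htt x y hx hy
    have hcard : s.card = 4 := by
      rw [hs]
      rw [Finset.card_insert_of_notMem (by
        simp only [Finset.mem_insert, Finset.mem_singleton]
        push_neg
        exact ⟨Ne.symm hiN.1, Ne.symm hjN.1, Ne.symm hlN.1⟩)]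
      rw [Finset.card_insert_of_notMem (by
        simp only [Finset.mem_insert, Finset.mem_singleton]
        push_neg
        exact ⟨hij', hil'⟩)]
      rw [Finset.card_pair hjl']
    have := h2 s hsf
    omega
  · -- range
    rw [← hN, ← hrange]
    ext u
    constructor
    · rintro ⟨i, rfl⟩
      exact ⟨i.val, rfl⟩
    · rintro ⟨n, rfl⟩
      exact ⟨(n : ZMod p), (E _ _ (ZMod.val_natCast p n)).trans (fmod n)⟩

end Main3
/-- A simple 3-polytope `P` (encoded by its dual simplicial 2-sphere `K`) is flag
if and only if every facet of `P` is surrounded by a `k`-belt,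
where `k` is the number of edges of that facet. -/
theorem stmt5 {V : Type} [DecidableEq V] [Fintype V] (K : SC V) (hS : IsSphere2 K) :
    IsFlag K ↔ ∀ v : V, VertexSurrounded K v := by
  constructor
  · intro hF v
    exact flag_surrounded K hS hF v
  · intro hB
    exact surrounded_flag K hS hB
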